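/- Let d ≥ 6 and let I ⊆ ℝ be an interval. There exists a constant C = C(d) such that for every measurable v : I × ℝ^d → ℂ, with Ω' := {(t,x) ∈ I × ℝ^d : |v(t,x)| ≤ W(x)/4}, one has ‖ W^{−1} |∇W| · |v|^{p_c} ‖_{L^2_t L^{2d/(d+2)}_x(Ω')} ≤ C ‖v‖_{L^{q₀}_t L^{r₀}_x(I×ℝ^d)}^{(2d+3)/(2(d−2))}, where q₀ = (2d+3)/(d−2) and r₀ = 2d(2d+3)/((d−2)(2d−1)). -/

import Mathlib

open MeasureTheory
open scoped ENNReal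

noncomputable section

/-- ℝ^d as Euclidean space -/
abbrev Euc (d : ℕ) := EuclideanSpace ℝ (Fin d)

/-- The ground state W(x) = (1 + |x|²/(d(d−2)))^{−(d−2)/2}. -/
def Wgs (d : ℕ) (x : Euc d) : ℝ :=
  (1 + ‖x‖ ^ 2 / ((d : ℝ) * ((d : ℝ) - 2))) ^ (-(((d : ℝ) - 2) / 2))

/-- p_c = (d+2)/(d-2) -/
def pc (d : ℕ) : ℝ := ((d : ℝ) + 2) / ((d : ℝ) - 2)

/-- Mixed norm ‖F‖_{L^q_t L^r_x(Ω)} = (∫_I (∫_{ℝ^d} |F(t,x)|^r 1_Ω(t,x) dx)^{q/r} dt)^{1/q}. -/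
def mixNorm (d : ℕ) (q r : ℝ) (I : Set ℝ) (Ω : Set (ℝ × Euc d))
    (F : ℝ × Euc d → ℝ) : ℝ≥0∞ :=
  (∫⁻ t in I,
      (∫⁻ x, Ω.indicator (fun p => ENNReal.ofReal (|F p| ^ r)) (t, x)) ^ (q / r)) ^ (1 / q)

/-- time exponent q₀ = (2d+3)/(d−2) -/
def q0 (d : ℕ) : ℝ := (2 * (d : ℝ) + 3) / ((d : ℝ) - 2)

/-- space exponent r₀ = 2d(2d+3)/((d−2)(2d−1)) -/
def r0 (d : ℕ) : ℝ := 2 * (d : ℝ) * (2 * (d : ℝ) + 3) / (((d : ℝ) - 2) * (2 * (d : ℝ) - 1))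

lemma base_pos {d : ℕ} (hd : 6 ≤ d) (x : Euc d) :
    0 < 1 + ‖x‖ ^ 2 / ((d : ℝ) * ((d : ℝ) - 2)) := by
  have h1 : (6:ℝ) ≤ d := by exact_mod_cast hd
  have h2 : 0 < (d:ℝ) * ((d:ℝ) - 2) := by nlinarith
  positivity

lemma hasFDerivAt_Wgs {d : ℕ} (hd : 6 ≤ d) (x : Euc d) :
    HasFDerivAt (Wgs d)
      (((-(((d:ℝ)-2)/2)) * (1 + ‖x‖^2 / ((d:ℝ)*((d:ℝ)-2))) ^ ((-(((d:ℝ)-2)/2)) - 1)) •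
        ((((d:ℝ)*((d:ℝ)-2))⁻¹) • (2 • (innerSL ℝ x)))) x := by
  have hB : HasFDerivAt (fun y : Euc d => 1 + ‖y‖^2 / ((d:ℝ)*((d:ℝ)-2)))
      ((((d:ℝ)*((d:ℝ)-2))⁻¹) • (2 • (innerSL ℝ x))) x := by
    have h := (hasStrictFDerivAt_norm_sq x).hasFDerivAt
    have h2 := (h.const_mul (((d:ℝ)*((d:ℝ)-2))⁻¹)).const_add 1
    simpa [div_eq_inv_mul] using h2
  have hf : HasDerivAt (fun y : ℝ => y ^ (-(((d:ℝ)-2)/2)))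
      ((-(((d:ℝ)-2)/2)) * (1 + ‖x‖^2 / ((d:ℝ)*((d:ℝ)-2))) ^ ((-(((d:ℝ)-2)/2)) - 1))
      (1 + ‖x‖^2 / ((d:ℝ)*((d:ℝ)-2))) :=
    Real.hasDerivAt_rpow_const (Or.inl (ne_of_gt (base_pos hd x)))
  exact hf.comp_hasFDerivAt x hB

lemma norm_fderiv_Wgs_le {d : ℕ} (hd : 6 ≤ d) (x : Euc d) :
    ‖fderiv ℝ (Wgs d) x‖ ≤
      (‖x‖ / d) * (1 + ‖x‖^2 / ((d:ℝ)*((d:ℝ)-2))) ^ (-((d:ℝ)/2)) := by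
  have hD : (6:ℝ) ≤ d := by exact_mod_cast hd
  have hc : 0 < (d:ℝ) * ((d:ℝ) - 2) := by nlinarith
  rw [(hasFDerivAt_Wgs hd x).fderiv]
  rw [← Nat.cast_smul_eq_nsmul ℝ 2 (innerSL ℝ x)]
  rw [norm_smul, norm_smul, norm_smul, innerSL_apply_norm]
  push_cast
  have hBpos := base_pos hd x
  have h1 : ((-(((d:ℝ)-2)/2)) - 1) = -((d:ℝ)/2) := by ring
  rw [h1]
  have h2 : (0:ℝ) < (1 + ‖x‖^2 / ((d:ℝ)*((d:ℝ)-2))) ^ (-((d:ℝ)/2)) :=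
    Real.rpow_pos_of_pos hBpos _
  rw [Real.norm_eq_abs, Real.norm_eq_abs, Real.norm_eq_abs, abs_mul]
  rw [abs_of_pos h2, abs_neg, abs_of_nonneg (by linarith : (0:ℝ) ≤ ((d:ℝ)-2)/2),
    abs_of_pos (by positivity : (0:ℝ) < (((d:ℝ)*((d:ℝ)-2))⁻¹)), abs_of_pos (by norm_num : (0:ℝ) < 2)]
  have : ((d:ℝ)-2)/2 * (1 + ‖x‖^2 / ((d:ℝ)*((d:ℝ)-2))) ^ (-((d:ℝ)/2)) *
      ((((d:ℝ)*((d:ℝ)-2))⁻¹) * (2 * ‖x‖)) = (‖x‖/d) * (1 + ‖x‖^2 / ((d:ℝ)*((d:ℝ)-2))) ^ (-((d:ℝ)/2)) := by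
    have hd2' : (d:ℝ) - 2 ≠ 0 := by linarith
    have hd0' : (d:ℝ) ≠ 0 := by linarith
    field_simp
  rw [this]

def gfun (d : ℕ) (x : Euc d) : ℝ :=
  (Wgs d x)⁻¹ * ‖fderiv ℝ (Wgs d) x‖ * (Wgs d x / 4) ^ (1/(2*((d:ℝ)-2)))

lemma Wgs_pos {d : ℕ} (hd : 6 ≤ d) (x : Euc d) : 0 < Wgs d x :=
  Real.rpow_pos_of_pos (base_pos hd x) _

lemma gfun_nonneg {d : ℕ} (hd : 6 ≤ d) (x : Euc d) : 0 ≤ gfun d x := by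
  have := Wgs_pos hd x
  have h4 : (0:ℝ) < Wgs d x / 4 := by linarith
  unfold gfun
  positivity

lemma measurable_gfun (d : ℕ) : Measurable (gfun d) := by
  have h1 : Measurable (Wgs d) := by
    unfold Wgs
    fun_prop
  have h2 : Measurable (fun x : Euc d => ‖fderiv ℝ (Wgs d) x‖) :=
    (measurable_fderiv ℝ (Wgs d)).norm
  unfold gfun
  fun_prop

lemma gfun_le {d : ℕ} (hd : 6 ≤ d) :
    ∃ K : ℝ, 0 < K ∧ ∀ x : Euc d, gfun d x ≤ K * (1 + ‖x‖) ^ (-(3/2) : ℝ) := by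
  have hD : (6:ℝ) ≤ d := by exact_mod_cast hd
  have hc : 0 < (d:ℝ) * ((d:ℝ) - 2) := by nlinarith
  set c : ℝ := (d:ℝ) * ((d:ℝ) - 2) with hcdef
  set δ : ℝ := 1/(2*((d:ℝ)-2)) with hδdef
  have hδpos : 0 < δ := by rw [hδdef]; exact one_div_pos.mpr (by linarith)
  have hd0 : (0:ℝ) < (d:ℝ) := by linarith
  have hd2 : ((d:ℝ) - 2) ≠ 0 := by linarith
  have hK : (0:ℝ) < (1/(d:ℝ)) * (4:ℝ) ^ (-δ) * (2*c) ^ ((5:ℝ)/4) :=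
    mul_pos (mul_pos (div_pos one_pos hd0) (Real.rpow_pos_of_pos (by norm_num) _))
      (Real.rpow_pos_of_pos (by linarith) _)
  refine ⟨(1/(d:ℝ)) * (4:ℝ) ^ (-δ) * (2*c) ^ ((5:ℝ)/4), hK, fun x => ?_⟩
  set B : ℝ := 1 + ‖x‖^2 / c with hBdef
  have hBpos : 0 < B := base_pos hd x
  set t : ℝ := ‖x‖ with htdef
  have ht : 0 ≤ t := norm_nonneg x
  -- step 1 : gfun ≤ (t/d) * 4^(-δ) * B^(-5/4)
  have hW : Wgs d x = B ^ (-(((d:ℝ)-2)/2)) := rfl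
  have hWinv : (Wgs d x)⁻¹ = B ^ ((((d:ℝ)-2)/2)) := by
    rw [hW, Real.rpow_neg hBpos.le, inv_inv]
  have hWq : (Wgs d x / 4) ^ δ = (4:ℝ)^(-δ) * B ^ (-(((d:ℝ)-2)/2) * δ) := by
    rw [hW, div_eq_mul_inv, mul_comm, Real.mul_rpow (by positivity) (Real.rpow_nonneg hBpos.le _),
      ← Real.rpow_neg_one (4:ℝ), ← Real.rpow_mul (by norm_num : (0:ℝ) ≤ 4),
      ← Real.rpow_mul hBpos.le]
    ring_nf
  have hfd := norm_fderiv_Wgs_le hd x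
  have step1 : gfun d x ≤ (t/(d:ℝ)) * (4:ℝ)^(-δ) * B ^ (-(5/4) : ℝ) := by
    have hmul : gfun d x ≤ B ^ ((((d:ℝ)-2)/2)) * ((t/(d:ℝ)) * B ^ (-((d:ℝ)/2))) *
        ((4:ℝ)^(-δ) * B ^ (-(((d:ℝ)-2)/2) * δ)) := by
      unfold gfun
      rw [hWinv, hWq]
      have h1 : 0 ≤ B ^ ((((d:ℝ)-2)/2)) := (Real.rpow_pos_of_pos hBpos _).le
      have h2 : 0 ≤ (4:ℝ)^(-δ) * B ^ (-(((d:ℝ)-2)/2) * δ) := by positivity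
      have h3 : 0 ≤ ‖fderiv ℝ (Wgs d) x‖ := norm_nonneg _
      exact mul_le_mul_of_nonneg_right (mul_le_mul_of_nonneg_left hfd h1) h2
    refine hmul.trans_eq ?_
    have hBe : B ^ (((d:ℝ)-2)/2) * B ^ (-((d:ℝ)/2)) * B ^ (-(((d:ℝ)-2)/2) * δ)
        = B ^ (-(5/4) : ℝ) := by
      rw [← Real.rpow_add hBpos, ← Real.rpow_add hBpos]
      congr 1
      rw [hδdef]
      field_simp
      ring
    calc B ^ (((d:ℝ)-2)/2) * (t/(d:ℝ) * B ^ (-((d:ℝ)/2))) * ((4:ℝ)^(-δ) * B ^ (-(((d:ℝ)-2)/2) * δ))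
        = t/(d:ℝ) * (4:ℝ)^(-δ) *
          (B ^ (((d:ℝ)-2)/2) * B ^ (-((d:ℝ)/2)) * B ^ (-(((d:ℝ)-2)/2) * δ)) := by ring
      _ = t/(d:ℝ) * (4:ℝ)^(-δ) * B ^ (-(5/4) : ℝ) := by rw [hBe]
  -- step 2 : B ≥ (1+t)^2/(2c), so B^(-5/4) ≤ (2c)^(5/4) * (1+t)^(-5/2)
  have h1t : (0:ℝ) < 1 + t := by linarith
  have hq : (1+t)^2 / (2*c) ≤ B := by
    rw [hBdef, div_le_iff₀ (by positivity)]
    have h2c : t^2/c * (2*c) = 2 * t^2 := by field_simp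
    nlinarith [sq_nonneg (t - 1)]
  have hqpos : (0:ℝ) < (1+t)^2/(2*c) := by positivity
  have step2 : B ^ (-(5/4):ℝ) ≤ (2*c) ^ ((5:ℝ)/4) * (1+t) ^ (-(5/2) : ℝ) := by
    have := Real.rpow_le_rpow_of_nonpos hqpos hq (by norm_num : (-(5/4):ℝ) ≤ 0)
    refine this.trans_eq ?_
    rw [div_eq_mul_inv, Real.mul_rpow (by positivity) (by positivity),
      ← Real.rpow_neg_one (2*c), ← Real.rpow_natCast (1+t) 2,
      ← Real.rpow_mul h1t.le, ← Real.rpow_mul (by positivity : (0:ℝ) ≤ 2*c)]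
    norm_num
    ring
  -- combine
  have htle : t ≤ 1 + t := by linarith
  calc gfun d x ≤ (t/(d:ℝ)) * (4:ℝ)^(-δ) * B ^ (-(5/4) : ℝ) := step1
    _ ≤ (t/(d:ℝ)) * (4:ℝ)^(-δ) * ((2*c) ^ ((5:ℝ)/4) * (1+t) ^ (-(5/2) : ℝ)) := by
        have : (0:ℝ) ≤ (t/(d:ℝ)) * (4:ℝ)^(-δ) := by positivity
        exact mul_le_mul_of_nonneg_left step2 this
    _ ≤ ((1+t)/(d:ℝ)) * (4:ℝ)^(-δ) * ((2*c) ^ ((5:ℝ)/4) * (1+t) ^ (-(5/2) : ℝ)) := by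
        have h5 : (0:ℝ) ≤ (1+t) ^ (-(5/2) : ℝ) := (Real.rpow_pos_of_pos h1t _).le
        have h4 : (0:ℝ) ≤ (4:ℝ)^(-δ) := (Real.rpow_pos_of_pos (by norm_num) _).le
        have h2c5 : (0:ℝ) ≤ (2*c) ^ ((5:ℝ)/4) := (Real.rpow_pos_of_pos (by linarith) _).le
        have hdiv : t/(d:ℝ) ≤ (1+t)/(d:ℝ) := by
          gcongr
        exact mul_le_mul_of_nonneg_right
          (mul_le_mul_of_nonneg_right hdiv h4) (mul_nonneg h2c5 h5)
    _ = (1/(d:ℝ)) * (4:ℝ)^(-δ) * (2*c) ^ ((5:ℝ)/4) * ((1+t) * (1+t) ^ (-(5/2) : ℝ)) := by ring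
    _ = (1/(d:ℝ)) * (4:ℝ)^(-δ) * (2*c) ^ ((5:ℝ)/4) * (1 + ‖x‖) ^ (-(3/2) : ℝ) := by
        congr 1
        rw [← Real.rpow_one_add' h1t.le (by norm_num)]
        norm_num
        rfl

lemma gfun_finite {d : ℕ} (hd : 6 ≤ d) :
    (∫⁻ x : Euc d, ENNReal.ofReal (gfun d x ^ (4*(d:ℝ)/5))) < ∞ := by
  obtain ⟨K, hK, hKb⟩ := gfun_le (d := d) hd
  have hD : (6:ℝ) ≤ d := by exact_mod_cast hd
  have ha : (0:ℝ) ≤ 4*(d:ℝ)/5 := by positivity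
  have hb : ∀ x : Euc d, gfun d x ^ (4*(d:ℝ)/5) ≤
      K ^ (4*(d:ℝ)/5) * (1+‖x‖) ^ (-(6*(d:ℝ)/5)) := by
    intro x
    have h1t : (0:ℝ) < 1 + ‖x‖ := by have := norm_nonneg x; linarith
    calc gfun d x ^ (4*(d:ℝ)/5) ≤ (K * (1+‖x‖) ^ (-(3/2):ℝ)) ^ (4*(d:ℝ)/5) :=
          Real.rpow_le_rpow (gfun_nonneg hd x) (hKb x) ha
      _ = K ^ (4*(d:ℝ)/5) * (1+‖x‖) ^ (-(6*(d:ℝ)/5)) := by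
          rw [Real.mul_rpow hK.le (Real.rpow_nonneg h1t.le _), ← Real.rpow_mul h1t.le]
          congr 1
          ring
  calc (∫⁻ x : Euc d, ENNReal.ofReal (gfun d x ^ (4*(d:ℝ)/5)))
      ≤ ∫⁻ x : Euc d, ENNReal.ofReal (K ^ (4*(d:ℝ)/5) * (1+‖x‖) ^ (-(6*(d:ℝ)/5))) :=
        lintegral_mono fun x => ENNReal.ofReal_le_ofReal (hb x)
    _ = ENNReal.ofReal (K ^ (4*(d:ℝ)/5)) *
        ∫⁻ x : Euc d, ENNReal.ofReal ((1+‖x‖) ^ (-(6*(d:ℝ)/5))) := by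
        simp_rw [ENNReal.ofReal_mul (Real.rpow_nonneg hK.le _)]
        rw [lintegral_const_mul' _ _ ENNReal.ofReal_ne_top]
    _ < ∞ := by
        refine ENNReal.mul_lt_top ENNReal.ofReal_lt_top ?_
        have hr : (Module.finrank ℝ (Euc d) : ℝ) < 6*(d:ℝ)/5 := by
          rw [finrank_euclideanSpace, Fintype.card_fin]
          have hD0 : (0:ℝ) < (d:ℝ) := by linarith
          linarith
        exact finite_integral_one_add_norm hr

/-- on Ω' = {|v| ≤ W/4},
‖W^{−1}|∇W||v|^{p_c}‖_{L²_t L^{2d/(d+2)}_x(Ω')} ≤ C ‖v‖_{L^{q₀}_t L^{r₀}_x}^{(2d+3)/(2(d−2))}. -/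
theorem Winv_gradW_vpc_small_regime (d : ℕ) (hd : 6 ≤ d) (I : Set ℝ) (hI : I.OrdConnected) :
    ∃ C : ℝ, 0 < C ∧ ∀ v : ℝ × Euc d → ℂ, Measurable v →
      mixNorm d 2 (2 * (d : ℝ) / ((d : ℝ) + 2)) I
          {p : ℝ × Euc d | p.1 ∈ I ∧ ‖v p‖ ≤ Wgs d p.2 / 4}
          (fun p => (Wgs d p.2)⁻¹ * ‖fderiv ℝ (Wgs d) p.2‖ * ‖v p‖ ^ (pc d)) ≤
        ENNReal.ofReal C *
          (mixNorm d (q0 d) (r0 d) I Set.univ (fun p => ‖v p‖)) ^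
            ((2 * (d : ℝ) + 3) / (2 * ((d : ℝ) - 2))) := by
  classical
  have hD : (6:ℝ) ≤ (d:ℝ) := by exact_mod_cast hd
  have hD0 : (0:ℝ) < (d:ℝ) := by linarith
  have hD2 : (0:ℝ) < (d:ℝ) - 2 := by linarith
  have hDp2 : (0:ℝ) < (d:ℝ) + 2 := by linarith
  have h2D1 : (0:ℝ) < 2*(d:ℝ) - 1 := by linarith
  have h2D3 : (0:ℝ) < 2*(d:ℝ) + 3 := by linarith
  set X : ℝ≥0∞ := ∫⁻ x : Euc d, ENNReal.ofReal (gfun d x ^ (4*(d:ℝ)/5)) with hXdef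
  have hX : X < ∞ := gfun_finite hd
  set A : ℝ≥0∞ := X ^ ((5:ℝ)/(4*(d:ℝ))) with hAdef
  have hA_ne_top : A ≠ ∞ := by
    rw [hAdef]
    exact ENNReal.rpow_ne_top_of_nonneg (by positivity) hX.ne
  have hCpos : (0:ℝ) < A.toReal + 1 := by positivity
  refine ⟨A.toReal + 1, hCpos, ?_⟩
  intro v hv
  have hA_le : A ≤ ENNReal.ofReal (A.toReal + 1) := by
    calc A = ENNReal.ofReal A.toReal := (ENNReal.ofReal_toReal hA_ne_top).symm
      _ ≤ _ := ENNReal.ofReal_le_ofReal (by linarith)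
  simp only [mixNorm, Set.indicator_univ, abs_norm]
  set r' : ℝ := 2*(d:ℝ)/((d:ℝ)+2) with hr'def
  set θ : ℝ := (2*(d:ℝ)+3)/(2*((d:ℝ)-2)) with hθdef
  set a : ℝ := 4*(d:ℝ)/5 with hadef
  set b : ℝ := 4*(d:ℝ)/(2*(d:ℝ)-1) with hbdef
  have hr'pos : 0 < r' := by rw [hr'def]; exact div_pos (by linarith) hDp2
  have hapos : 0 < a := by rw [hadef]; exact div_pos (by linarith) (by norm_num)
  have hbpos : 0 < b := by rw [hbdef]; exact div_pos (by linarith) h2D1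
  have hθpos : 0 < θ := by rw [hθdef]; exact div_pos h2D3 (by linarith)
  have hconj : Real.HolderConjugate (a/r') (b/r') := by
    rw [Real.holderConjugate_iff]
    constructor
    · rw [lt_div_iff₀ hr'pos, one_mul, hr'def, hadef,
        div_lt_div_iff₀ hDp2 (by norm_num : (0:ℝ) < 5)]
      nlinarith
    · rw [hadef, hbdef, hr'def]
      field_simp
      ring
  -- pointwise bound
  have key1 : ∀ t : ℝ, ∀ x : Euc d,
      Set.indicator {p : ℝ × Euc d | p.1 ∈ I ∧ ‖v p‖ ≤ Wgs d p.2 / 4}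
        (fun p => ENNReal.ofReal
          (|(Wgs d p.2)⁻¹ * ‖fderiv ℝ (Wgs d) p.2‖ * ‖v p‖ ^ (pc d)| ^ r')) (t, x) ≤
      ENNReal.ofReal (gfun d x) ^ r' * ENNReal.ofReal (‖v (t,x)‖ ^ θ) ^ r' := by
    intro t x
    by_cases hmem : (t, x) ∈ {p : ℝ × Euc d | p.1 ∈ I ∧ ‖v p‖ ≤ Wgs d p.2 / 4}
    · rw [Set.indicator_of_mem hmem]
      obtain ⟨-, hle⟩ := hmem
      have hWpos := Wgs_pos hd x
      set δ' : ℝ := 1/(2*((d:ℝ)-2)) with hδ'def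
      have hδ'pos : 0 < δ' := by rw [hδ'def]; exact one_div_pos.mpr (by linarith)
      have hpc_eq : pc d = θ + δ' := by
        rw [pc, hθdef, hδ'def]; field_simp; ring
      have hFg : (Wgs d x)⁻¹ * ‖fderiv ℝ (Wgs d) x‖ * ‖v (t,x)‖ ^ (pc d) ≤
          gfun d x * ‖v (t,x)‖ ^ θ := by
        have hsplit : ‖v (t,x)‖ ^ (pc d) = ‖v (t,x)‖ ^ θ * ‖v (t,x)‖ ^ δ' := by
          rw [hpc_eq, Real.rpow_add' (norm_nonneg _) (by rw [← hpc_eq]; rw [pc]; positivity)]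
        have hmono : ‖v (t,x)‖ ^ δ' ≤ (Wgs d x / 4) ^ δ' :=
          Real.rpow_le_rpow (norm_nonneg _) hle hδ'pos.le
        have h1 : (0:ℝ) ≤ (Wgs d x)⁻¹ * ‖fderiv ℝ (Wgs d) x‖ :=
          mul_nonneg (by positivity) (norm_nonneg _)
        have hvθ : (0:ℝ) ≤ ‖v (t,x)‖ ^ θ := Real.rpow_nonneg (norm_nonneg _) _
        calc (Wgs d x)⁻¹ * ‖fderiv ℝ (Wgs d) x‖ * ‖v (t,x)‖ ^ (pc d)
            = ((Wgs d x)⁻¹ * ‖fderiv ℝ (Wgs d) x‖) * (‖v (t,x)‖ ^ θ * ‖v (t,x)‖ ^ δ') := by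
              rw [hsplit]
          _ ≤ ((Wgs d x)⁻¹ * ‖fderiv ℝ (Wgs d) x‖) * (‖v (t,x)‖ ^ θ * (Wgs d x / 4) ^ δ') := by
              apply mul_le_mul_of_nonneg_left _ h1
              exact mul_le_mul_of_nonneg_left hmono hvθ
          _ = gfun d x * ‖v (t,x)‖ ^ θ := by
              rw [gfun]; ring
      have hF0 : (0:ℝ) ≤ (Wgs d x)⁻¹ * ‖fderiv ℝ (Wgs d) x‖ * ‖v (t,x)‖ ^ (pc d) := by
        have := Real.rpow_nonneg (norm_nonneg (v (t,x))) (pc d)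
        have h1 : (0:ℝ) ≤ (Wgs d x)⁻¹ := by positivity
        exact mul_nonneg (mul_nonneg h1 (norm_nonneg _)) this
      have habs : |(Wgs d x)⁻¹ * ‖fderiv ℝ (Wgs d) x‖ * ‖v (t,x)‖ ^ (pc d)| ^ r' ≤
          (gfun d x * ‖v (t,x)‖ ^ θ) ^ r' := by
        rw [abs_of_nonneg hF0]
        exact Real.rpow_le_rpow hF0 hFg hr'pos.le
      refine (ENNReal.ofReal_le_ofReal habs).trans ?_
      have hgh : (0:ℝ) ≤ gfun d x * ‖v (t,x)‖ ^ θ :=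
        mul_nonneg (gfun_nonneg hd x) (Real.rpow_nonneg (norm_nonneg _) _)
      rw [← ENNReal.ofReal_rpow_of_nonneg hgh hr'pos.le,
        ENNReal.ofReal_mul (gfun_nonneg hd x),
        ENNReal.mul_rpow_of_nonneg _ _ hr'pos.le]
    · rw [Set.indicator_of_notMem hmem]
      exact zero_le
  -- inner Hölder
  have hφeq : ∀ x : Euc d, (ENNReal.ofReal (gfun d x) ^ r') ^ (a/r') =
      ENNReal.ofReal (gfun d x ^ a) := by
    intro x
    rw [← ENNReal.rpow_mul]
    have : r' * (a/r') = a := by field_simp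
    rw [this, ENNReal.ofReal_rpow_of_nonneg (gfun_nonneg hd x) hapos.le]
  have hθb : θ * b = r0 d := by
    rw [hθdef, hbdef, r0]; field_simp; ring
  have hψeq : ∀ t : ℝ, ∀ x : Euc d, (ENNReal.ofReal (‖v (t,x)‖ ^ θ) ^ r') ^ (b/r') =
      ENNReal.ofReal (‖v (t,x)‖ ^ (r0 d)) := by
    intro t x
    rw [← ENNReal.rpow_mul]
    have : r' * (b/r') = b := by field_simp
    rw [this, ENNReal.ofReal_rpow_of_nonneg (Real.rpow_nonneg (norm_nonneg _) _) hbpos.le,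
      ← Real.rpow_mul (norm_nonneg _), hθb]
  have hXa : (∫⁻ x : Euc d, ENNReal.ofReal (gfun d x ^ a)) = X := by rw [hXdef, hadef]
  have step_inner : ∀ t : ℝ,
      (∫⁻ x, Set.indicator {p : ℝ × Euc d | p.1 ∈ I ∧ ‖v p‖ ≤ Wgs d p.2 / 4}
        (fun p => ENNReal.ofReal
          (|(Wgs d p.2)⁻¹ * ‖fderiv ℝ (Wgs d) p.2‖ * ‖v p‖ ^ (pc d)| ^ r')) (t, x)) ≤
      X ^ (r'/a) * (∫⁻ x, ENNReal.ofReal (‖v (t,x)‖ ^ (r0 d))) ^ (r'/b) := by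
    intro t
    have hgm : Measurable (gfun d) := measurable_gfun d
    have hm1 : AEMeasurable (fun x : Euc d => ENNReal.ofReal (gfun d x) ^ r') := by fun_prop
    have hm2 : AEMeasurable (fun x : Euc d => ENNReal.ofReal (‖v (t,x)‖ ^ θ) ^ r') := by
      have : Measurable (fun x : Euc d => v (t, x)) := hv.comp measurable_prodMk_left
      fun_prop
    calc (∫⁻ x, Set.indicator _ _ (t, x))
        ≤ ∫⁻ x, (fun y : Euc d => ENNReal.ofReal (gfun d y) ^ r') x *
            (fun y : Euc d => ENNReal.ofReal (‖v (t,y)‖ ^ θ) ^ r') x :=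
          lintegral_mono (fun x => key1 t x)
      _ ≤ (∫⁻ x, ((fun y : Euc d => ENNReal.ofReal (gfun d y) ^ r') x) ^ (a/r')) ^ (1/(a/r')) *
          (∫⁻ x, ((fun y : Euc d => ENNReal.ofReal (‖v (t,y)‖ ^ θ) ^ r') x) ^ (b/r')) ^ (1/(b/r')) :=
          ENNReal.lintegral_mul_le_Lp_mul_Lq volume hconj hm1 hm2
      _ = X ^ (r'/a) * (∫⁻ x, ENNReal.ofReal (‖v (t,x)‖ ^ (r0 d))) ^ (r'/b) := by
          simp only []
          simp_rw [hφeq, hψeq t, hXa, one_div_div]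
  -- exponent bookkeeping
  have hexp1 : (r'/a) * ((2:ℝ)/r') = 2/a := by
    field_simp
  have hexp2 : (r'/b) * ((2:ℝ)/r') = q0 d / r0 d := by
    rw [hbdef, hr'def, q0, r0]; field_simp; ring
  have step_t : ∀ t : ℝ,
      (∫⁻ x, Set.indicator {p : ℝ × Euc d | p.1 ∈ I ∧ ‖v p‖ ≤ Wgs d p.2 / 4}
        (fun p => ENNReal.ofReal
          (|(Wgs d p.2)⁻¹ * ‖fderiv ℝ (Wgs d) p.2‖ * ‖v p‖ ^ (pc d)| ^ r')) (t, x)) ^ ((2:ℝ)/r') ≤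
      X ^ ((2:ℝ)/a) * (∫⁻ x, ENNReal.ofReal (‖v (t,x)‖ ^ (r0 d))) ^ (q0 d / r0 d) := by
    intro t
    have h1 := ENNReal.rpow_le_rpow (step_inner t)
      (div_nonneg (by norm_num : (0:ℝ) ≤ 2) hr'pos.le)
    rw [ENNReal.mul_rpow_of_nonneg _ _ (div_nonneg (by norm_num) hr'pos.le),
      ← ENNReal.rpow_mul, ← ENNReal.rpow_mul, hexp1, hexp2] at h1
    exact h1
  have hXpow_ne_top : X ^ ((2:ℝ)/a) ≠ ∞ :=
    ENNReal.rpow_ne_top_of_nonneg (div_nonneg (by norm_num) hapos.le) hX.ne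
  have h12 : ((2:ℝ)/a) * (1/2) = 1/a := by ring
  have hhalf : (1:ℝ)/(q0 d) * θ = 1/2 := by
    rw [q0, hθdef]; field_simp
  rw [← ENNReal.rpow_mul, hhalf]
  refine le_trans ?_ (mul_le_mul_left hA_le _)
  calc (∫⁻ t in I, (∫⁻ x, Set.indicator {p : ℝ × Euc d | p.1 ∈ I ∧ ‖v p‖ ≤ Wgs d p.2 / 4}
        (fun p => ENNReal.ofReal
          (|(Wgs d p.2)⁻¹ * ‖fderiv ℝ (Wgs d) p.2‖ * ‖v p‖ ^ (pc d)| ^ r')) (t, x)) ^ ((2:ℝ)/r'))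
        ^ ((1:ℝ)/2)
      ≤ (∫⁻ t in I, X ^ ((2:ℝ)/a) *
          (∫⁻ x, ENNReal.ofReal (‖v (t,x)‖ ^ (r0 d))) ^ (q0 d / r0 d)) ^ ((1:ℝ)/2) :=
        ENNReal.rpow_le_rpow (lintegral_mono step_t) (by norm_num)
    _ = (X ^ ((2:ℝ)/a) *
          ∫⁻ t in I, (∫⁻ x, ENNReal.ofReal (‖v (t,x)‖ ^ (r0 d))) ^ (q0 d / r0 d)) ^ ((1:ℝ)/2) := by
        rw [lintegral_const_mul' _ _ hXpow_ne_top]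
    _ = X ^ ((1:ℝ)/a) *
          (∫⁻ t in I, (∫⁻ x, ENNReal.ofReal (‖v (t,x)‖ ^ (r0 d))) ^ (q0 d / r0 d)) ^ ((1:ℝ)/2) := by
        rw [ENNReal.mul_rpow_of_nonneg _ _ (by norm_num : (0:ℝ) ≤ 1/2),
          ← ENNReal.rpow_mul, h12]
    _ = A * (∫⁻ t in I, (∫⁻ x, ENNReal.ofReal (‖v (t,x)‖ ^ (r0 d))) ^ (q0 d / r0 d)) ^ ((1:ℝ)/2) := by
        rw [hAdef]
        congr 1
        rw [hadef, one_div_div]
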